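/- Let ψ ∈ ℂ^{2^n} be a unit vector and i ∈ [n]. If there exists P ∈ stab(ψ) that acts non-trivially on qubit i (i.e. P = i^ℓ·Q_1⊗⋯⊗Q_n with Q_i ≠ I), then ⟨ψ, ((I − H_i)/2) ψ⟩ ≥ sin²(π/8). -/

import Mathlib

open Matrix

noncomputable section

/-- The space of `n`-qubit operators (2^n × 2^n complex matrices, indexed by bit strings). -/
abbrev QMat (n : ℕ) := Matrix (Fin n → Fin 2) (Fin n → Fin 2) ℂ

/-- The space of `n`-qubit state vectors (ℂ^{2^n}, indexed by bit strings). -/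
abbrev QVec (n : ℕ) := (Fin n → Fin 2) → ℂ

def PauliX : Matrix (Fin 2) (Fin 2) ℂ := !![0, 1; 1, 0]
def PauliY : Matrix (Fin 2) (Fin 2) ℂ := !![0, -Complex.I; Complex.I, 0]
def PauliZ : Matrix (Fin 2) (Fin 2) ℂ := !![1, 0; 0, -1]

/-- `Q` is one of the four single-qubit Pauli matrices `I, X, Y, Z`. -/
def IsSingleQubitPauli (Q : Matrix (Fin 2) (Fin 2) ℂ) : Prop :=
  Q = 1 ∨ Q = PauliX ∨ Q = PauliY ∨ Q = PauliZ

/-- Kronecker product, in qubit order, of `n` single-qubit operators. -/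
def tensorn (n : ℕ) (Q : Fin n → Matrix (Fin 2) (Fin 2) ℂ) : QMat n :=
  fun x y => ∏ j, Q j (x j) (y j)

/-- `P` is an element of the `n`-qubit Pauli group: `P = i^ℓ · Q_1 ⊗ ⋯ ⊗ Q_n`. -/
def IsPauli {n : ℕ} (P : QMat n) : Prop :=
  ∃ (ℓ : Fin 4) (Q : Fin n → Matrix (Fin 2) (Fin 2) ℂ),
    (∀ j, IsSingleQubitPauli (Q j)) ∧ P = (Complex.I ^ (ℓ : ℕ)) • tensorn n Q

/-- The Hadamard matrix `H = (1/√2)[[1,1],[1,-1]]`. -/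
def Had2 : Matrix (Fin 2) (Fin 2) ℂ := ((Real.sqrt 2 : ℂ))⁻¹ • !![1, 1; 1, -1]

/-- The Hadamard gate applied to qubit `i`: `H_i = I^{⊗(i-1)} ⊗ H ⊗ I^{⊗(n-i)}`. -/
def HadAt (n : ℕ) (i : Fin n) : QMat n := tensorn n (fun j => if j = i then Had2 else 1)

/-! ### Auxiliary lemmas -/

lemma tensorn_mul (n : ℕ) (Q R : Fin n → Matrix (Fin 2) (Fin 2) ℂ) :
    tensorn n Q * tensorn n R = tensorn n (fun j => Q j * R j) := by
  ext x y
  simp only [tensorn, Matrix.mul_apply, ← Finset.prod_mul_distrib]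
  rw [Fintype.prod_sum (fun j a => Q j (x j) a * R j a (y j))]

lemma tensorn_one (n : ℕ) : tensorn n (fun _ => (1 : Matrix (Fin 2) (Fin 2) ℂ)) = 1 := by
  ext x y
  simp only [tensorn, Matrix.one_apply]
  by_cases h : x = y
  · subst h; simp
  · rw [if_neg h]
    obtain ⟨j, hj⟩ := Function.ne_iff.mp h
    exact Finset.prod_eq_zero (Finset.mem_univ j) (by simp [hj])

lemma tensorn_conjTranspose (n : ℕ) (Q : Fin n → Matrix (Fin 2) (Fin 2) ℂ) :
    (tensorn n Q)ᴴ = tensorn n (fun j => (Q j)ᴴ) := by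
  ext x y
  simp only [tensorn, Matrix.conjTranspose_apply, Matrix.star_apply]
  exact map_prod (starRingEnd ℂ) _ _

lemma pauli_sq {Q : Matrix (Fin 2) (Fin 2) ℂ} (h : IsSingleQubitPauli Q) : Q * Q = 1 := by
  rcases h with h | h | h | h <;> subst h <;> ext a b <;> fin_cases a <;> fin_cases b <;>
    simp [PauliX, PauliY, PauliZ, Matrix.mul_apply, Fin.sum_univ_two, Matrix.one_apply,
      Complex.I_mul_I]

lemma pauli_herm {Q : Matrix (Fin 2) (Fin 2) ℂ} (h : IsSingleQubitPauli Q) : Qᴴ = Q := by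
  rcases h with h | h | h | h <;> subst h <;> ext a b <;> fin_cases a <;> fin_cases b <;>
    simp [PauliX, PauliY, PauliZ, Matrix.conjTranspose_apply, Matrix.one_apply]

/-- The single-qubit operator `A` applied at qubit `i`. -/
def Mi (n : ℕ) (i : Fin n) (A : Matrix (Fin 2) (Fin 2) ℂ) : QMat n :=
  tensorn n (fun j => if j = i then A else 1)

lemma HadAt_eq (n : ℕ) (i : Fin n) : HadAt n i = Mi n i Had2 := rfl

lemma Mi_apply (n : ℕ) (i : Fin n) (A : Matrix (Fin 2) (Fin 2) ℂ) (x y : Fin n → Fin 2) :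
    Mi n i A x y =
      A (x i) (y i) * ∏ j ∈ Finset.univ.erase i, (1 : Matrix (Fin 2) (Fin 2) ℂ) (x j) (y j) := by
  rw [Mi, tensorn, ← Finset.mul_prod_erase Finset.univ _ (Finset.mem_univ i), if_pos rfl]
  congr 1
  exact Finset.prod_congr rfl fun j hj => by rw [if_neg (Finset.ne_of_mem_erase hj)]

lemma Mi_add (n : ℕ) (i : Fin n) (A B : Matrix (Fin 2) (Fin 2) ℂ) :
    Mi n i (A + B) = Mi n i A + Mi n i B := by
  ext x y; simp [Mi_apply, Matrix.add_apply, add_mul]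

lemma Mi_sub (n : ℕ) (i : Fin n) (A B : Matrix (Fin 2) (Fin 2) ℂ) :
    Mi n i (A - B) = Mi n i A - Mi n i B := by
  ext x y; simp [Mi_apply, Matrix.sub_apply, sub_mul]

lemma Mi_smul (n : ℕ) (i : Fin n) (c : ℂ) (A : Matrix (Fin 2) (Fin 2) ℂ) :
    Mi n i (c • A) = c • Mi n i A := by
  ext x y; simp [Mi_apply, Matrix.smul_apply, smul_eq_mul, mul_assoc]

lemma Mi_one (n : ℕ) (i : Fin n) : Mi n i 1 = 1 := by
  rw [Mi]; simp only [ite_self]; exact tensorn_one n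

lemma Mi_mul (n : ℕ) (i : Fin n) (A B : Matrix (Fin 2) (Fin 2) ℂ) :
    Mi n i A * Mi n i B = Mi n i (A * B) := by
  rw [Mi, Mi, tensorn_mul]
  have h : (fun j => (if j = i then A else 1) * (if j = i then B else 1)) =
      fun j => if j = i then A * B else (1 : Matrix (Fin 2) (Fin 2) ℂ) := by
    funext j; by_cases h : j = i <;> simp [h]
  rw [h]
  rfl

lemma Mi_herm (n : ℕ) (i : Fin n) {A : Matrix (Fin 2) (Fin 2) ℂ} (hA : Aᴴ = A) :
    (Mi n i A)ᴴ = Mi n i A := by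
  rw [Mi, tensorn_conjTranspose]
  have h : (fun j => (if j = i then A else (1 : Matrix (Fin 2) (Fin 2) ℂ))ᴴ) =
      fun j => if j = i then A else (1 : Matrix (Fin 2) (Fin 2) ℂ) := by
    funext j; split <;> simp [hA]
  rw [h]

lemma star_dot_self_re_nonneg {m : Type*} [Fintype m] (w : m → ℂ) :
    0 ≤ (star w ⬝ᵥ w).re := by
  simp only [dotProduct, Pi.star_apply, Complex.re_sum]
  apply Finset.sum_nonneg
  intro x _
  simp only [Complex.mul_re, Complex.conj_re, Complex.conj_im, RCLike.star_def]
  nlinarith [sq_nonneg (w x).re, sq_nonneg (w x).im]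

lemma star_dot_comm {m : Type*} [Fintype m] (v w : m → ℂ) :
    star w ⬝ᵥ v = (starRingEnd ℂ) (star v ⬝ᵥ w) := by
  simp only [dotProduct, Pi.star_apply, map_sum, _root_.map_mul, RCLike.star_def,
    Complex.conj_conj]
  exact Finset.sum_congr rfl fun x _ => mul_comm _ _

/-! ### Concrete 2×2 identities -/

lemma had2_eq : Had2 = ((Real.sqrt 2 : ℂ))⁻¹ • (PauliX + PauliZ) := by
  rw [Had2]
  congr 1
  ext a b
  fin_cases a <;> fin_cases b <;> simp [PauliX, PauliZ]

lemma XX : PauliX * PauliX = 1 := pauli_sq (Or.inr (Or.inl rfl))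
lemma ZZ : PauliZ * PauliZ = 1 := pauli_sq (Or.inr (Or.inr (Or.inr rfl)))

lemma XZX : PauliX * PauliZ * PauliX = -PauliZ := by
  ext a b
  fin_cases a <;> fin_cases b <;>
    simp [PauliX, PauliZ, Matrix.mul_apply, Fin.sum_univ_two]

lemma ZXZ : PauliZ * PauliX * PauliZ = -PauliX := by
  ext a b
  fin_cases a <;> fin_cases b <;>
    simp [PauliX, PauliZ, Matrix.mul_apply, Fin.sum_univ_two]

lemma YXY : PauliY * PauliX * PauliY = -PauliX := by
  ext a b
  fin_cases a <;> fin_cases b <;>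
    simp [PauliX, PauliY, Matrix.mul_apply, Fin.sum_univ_two, Complex.I_mul_I]

lemma YZY : PauliY * PauliZ * PauliY = -PauliZ := by
  ext a b
  fin_cases a <;> fin_cases b <;>
    simp [PauliY, PauliZ, Matrix.mul_apply, Fin.sum_univ_two, Complex.I_mul_I]

lemma XHX : PauliX * Had2 * PauliX = ((Real.sqrt 2 : ℂ))⁻¹ • (PauliX - PauliZ) := by
  rw [had2_eq, Matrix.mul_smul, Matrix.smul_mul]
  congr 1
  rw [mul_add, add_mul, XX, one_mul, XZX]
  abel

lemma ZHZ : PauliZ * Had2 * PauliZ = ((Real.sqrt 2 : ℂ))⁻¹ • (PauliZ - PauliX) := by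
  rw [had2_eq, Matrix.mul_smul, Matrix.smul_mul]
  congr 1
  rw [mul_add, add_mul, ZXZ, ZZ, one_mul]
  abel

lemma YHY : PauliY * Had2 * PauliY = -Had2 := by
  rw [had2_eq, Matrix.mul_smul, Matrix.smul_mul, mul_add, add_mul, YXY, YZY]
  rw [← smul_neg]
  congr 1
  abel

/-- if some element of `stab(ψ)` acts non-trivially on qubit `i`, then
`⟨ψ, ((I - H_i)/2) ψ⟩ ≥ sin²(π/8)`. -/
theorem local_energy_bound_single_qubit (n : ℕ) (ψ : QVec n) (hunit : star ψ ⬝ᵥ ψ = 1)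
    (i : Fin n)
    (h : ∃ (ℓ : Fin 4) (Q : Fin n → Matrix (Fin 2) (Fin 2) ℂ),
      (∀ j, IsSingleQubitPauli (Q j)) ∧
      ((Complex.I ^ (ℓ : ℕ)) • tensorn n Q) *ᵥ ψ = ψ ∧ Q i ≠ 1) :
    Real.sin (Real.pi / 8) ^ 2 ≤
      (star ψ ⬝ᵥ (((2 : ℂ)⁻¹ • (1 - HadAt n i)) *ᵥ ψ)).re := by
  obtain ⟨ℓ, Q, hQ, hstab, hQi⟩ := h
  set e : Matrix (Fin 2) (Fin 2) ℂ → ℂ := fun A => star ψ ⬝ᵥ (Mi n i A *ᵥ ψ) with he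
  -- linearity of e
  have eadd : ∀ A B, e (A + B) = e A + e B := by
    intro A B
    simp only [he, Mi_add, Matrix.add_mulVec, dotProduct_add]
  have esub : ∀ A B, e (A - B) = e A - e B := by
    intro A B
    simp only [he, Mi_sub, Matrix.sub_mulVec, dotProduct_sub]
  have esmul : ∀ (c : ℂ) A, e (c • A) = c * e A := by
    intro c A
    simp only [he, Mi_smul, Matrix.smul_mulVec, dotProduct_smul, smul_eq_mul]
  -- facts about the stabilizer element
  set c : ℂ := Complex.I ^ (ℓ : ℕ) with hc
  have hcne : c ≠ 0 := pow_ne_zero _ Complex.I_ne_zero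
  have hcc : (starRingEnd ℂ) c * c = 1 := by
    rw [hc, map_pow, ← mul_pow, Complex.conj_I, neg_mul, Complex.I_mul_I, neg_neg, one_pow]
  set T : QMat n := tensorn n Q with hT
  have hTH : Tᴴ = T := by
    rw [hT, tensorn_conjTranspose]
    have h : (fun j => (Q j)ᴴ) = Q := funext fun j => pauli_herm (hQ j)
    rw [h]
  have hTv : T *ᵥ ψ = c⁻¹ • ψ := by
    have h1 : c • (T *ᵥ ψ) = ψ := by rw [← Matrix.smul_mulVec, hstab]
    conv_rhs => rw [← h1]
    rw [smul_smul, inv_mul_cancel₀ hcne, one_smul]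
  -- conjugation invariance
  have key : ∀ A, e (Q i * A * Q i) = e A := by
    intro A
    have hconj : Mi n i (Q i * A * Q i) = T * Mi n i A * T := by
      rw [hT, Mi, Mi, tensorn_mul, tensorn_mul]
      have h : (fun j => Q j * (if j = i then A else 1) * Q j) =
          fun j => if j = i then Q i * A * Q i else (1 : Matrix (Fin 2) (Fin 2) ℂ) := by
        funext j
        by_cases hj : j = i
        · simp [hj]
        · simp [hj, pauli_sq (hQ j)]
      rw [h]
    have hrow : star ψ ᵥ* T = (starRingEnd ℂ) c⁻¹ • star ψ := by
      have := Matrix.star_mulVec (M := T) (v := ψ)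
      rw [hTH, hTv] at this
      rw [← this, star_smul]
      rfl
    simp only [he]
    rw [hconj, ← Matrix.mulVec_mulVec, ← Matrix.mulVec_mulVec, hTv, Matrix.mulVec_smul,
      Matrix.mulVec_smul, dotProduct_smul, Matrix.dotProduct_mulVec, hrow,
      smul_dotProduct, smul_smul]
    have hone : c⁻¹ * (starRingEnd ℂ) c⁻¹ = 1 := by
      rw [map_inv₀, ← mul_inv, mul_comm c, hcc, inv_one]
    rw [hone, one_smul]
  -- e(1) = 1
  have eone : e 1 = 1 := by
    simp only [he, Mi_one, Matrix.one_mulVec, hunit]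
  -- bound |Re e A| ≤ 1 for hermitian involutions A
  have hbound : ∀ A : Matrix (Fin 2) (Fin 2) ℂ, Aᴴ = A → A * A = 1 → (e A).re ≤ 1 := by
    intro A hAh hA2
    set u : QVec n := Mi n i A *ᵥ ψ with hu
    have huu : star u ⬝ᵥ u = 1 := by
      have hsu : star u = star ψ ᵥ* Mi n i A := by
        rw [hu, Matrix.star_mulVec, Mi_herm n i hAh]
      rw [hsu, hu, ← Matrix.dotProduct_mulVec, Matrix.mulVec_mulVec, Mi_mul, hA2, Mi_one,
        Matrix.one_mulVec, hunit]
    have hups : star u ⬝ᵥ ψ = (starRingEnd ℂ) (e A) := star_dot_comm ψ u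
    have h0 : 0 ≤ (star (ψ - u) ⬝ᵥ (ψ - u)).re := star_dot_self_re_nonneg _
    have hpsu : star ψ ⬝ᵥ u = e A := rfl
    have hexp : star (ψ - u) ⬝ᵥ (ψ - u) =
        1 - e A - (starRingEnd ℂ) (e A) + 1 := by
      rw [star_sub, sub_dotProduct, dotProduct_sub, dotProduct_sub,
        hunit, huu, hups, hpsu]
      ring
    rw [hexp] at h0
    have : (1 - e A - (starRingEnd ℂ) (e A) + 1).re = 2 - 2 * (e A).re := by
      simp [Complex.sub_re, Complex.add_re, Complex.conj_re]
      ring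
    rw [this] at h0
    linarith
  -- common bound: Re e(Had2) ≤ (√2)⁻¹
  set r : ℂ := ((Real.sqrt 2 : ℂ))⁻¹ with hr
  have hr_real : r = ((Real.sqrt 2)⁻¹ : ℝ) := by rw [hr, Complex.ofReal_inv]
  have hsqrt2 : Real.sqrt 2 * Real.sqrt 2 = 2 := Real.mul_self_sqrt (by norm_num)
  have hsqrt2_pos : 0 < Real.sqrt 2 := Real.sqrt_pos.mpr (by norm_num)
  have hmain : (e Had2).re ≤ (Real.sqrt 2)⁻¹ := by
    rcases hQ i with hXi | hXi | hXi | hXi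
    · exact absurd hXi hQi
    · -- X case
      have h1 : e Had2 = r * (e PauliX + e PauliZ) := by
        rw [had2_eq, esmul, eadd]
      have h2 : e Had2 = r * (e PauliX - e PauliZ) := by
        conv_lhs => rw [← key Had2, hXi, XHX, esmul, esub]
      have h3 : e Had2 = r * e PauliX := by linear_combination (h1 + h2) / 2
      rw [h3, hr_real, Complex.re_ofReal_mul]
      have hx : (e PauliX).re ≤ 1 :=
        hbound PauliX (pauli_herm (Or.inr (Or.inl rfl))) XX
      have : (0:ℝ) ≤ (Real.sqrt 2)⁻¹ := by positivity
      nlinarith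
    · -- Y case
      have h2 : e Had2 = -e Had2 := by
        conv_lhs => rw [← key Had2, hXi, YHY]
        rw [show -Had2 = (-1 : ℂ) • Had2 by simp, esmul]
        ring
      have h3 : e Had2 = 0 := by linear_combination h2 / 2
      rw [h3]
      simp only [Complex.zero_re]
      positivity
    · -- Z case
      have h1 : e Had2 = r * (e PauliX + e PauliZ) := by
        rw [had2_eq, esmul, eadd]
      have h2 : e Had2 = r * (e PauliZ - e PauliX) := by
        conv_lhs => rw [← key Had2, hXi, ZHZ, esmul, esub]
      have h3 : e Had2 = r * e PauliZ := by linear_combination (h1 + h2) / 2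
      rw [h3, hr_real, Complex.re_ofReal_mul]
      have hz : (e PauliZ).re ≤ 1 :=
        hbound PauliZ (pauli_herm (Or.inr (Or.inr (Or.inr rfl)))) ZZ
      have : (0:ℝ) ≤ (Real.sqrt 2)⁻¹ := by positivity
      nlinarith
  -- final computation
  have hexpand : star ψ ⬝ᵥ (((2 : ℂ)⁻¹ • (1 - HadAt n i)) *ᵥ ψ) = (2:ℂ)⁻¹ * (1 - e Had2) := by
    rw [Matrix.smul_mulVec, Matrix.sub_mulVec, Matrix.one_mulVec,
      dotProduct_smul, dotProduct_sub, hunit, HadAt_eq, smul_eq_mul, he]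
  rw [hexpand]
  have h2inv : (2 : ℂ)⁻¹ = ((2⁻¹ : ℝ) : ℂ) := by norm_num
  rw [h2inv, Complex.re_ofReal_mul, Complex.sub_re, Complex.one_re]
  have hsin : Real.sin (Real.pi / 8) ^ 2 = 1 / 2 - Real.sqrt 2 / 4 := by
    rw [Real.sin_sq_eq_half_sub]
    rw [show 2 * (Real.pi / 8) = Real.pi / 4 by ring, Real.cos_pi_div_four]
    ring
  rw [hsin]
  have hinv : (Real.sqrt 2)⁻¹ = Real.sqrt 2 / 2 := by
    field_simp
    rw [Real.sq_sqrt (by norm_num : (0:ℝ) ≤ 2)]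
  rw [hinv] at hmain
  nlinarith
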